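/- Let (X, π) be a weighted n-partite simplicial complex with n ≥ 2, let μ be any probability distribution on the top faces Ω, and let x ∈ Ω[{1}] be a value of the first coordinate with positive (μ·Q₁)_{{1}} mass. Then the conditional distribution of μ·Psq given that the first coordinate equals x satisfies (μ·Psq)^{(x)} = (μ·Q₁)^{(x)} · Psq^{(x)}, where Psq = Q₁⋯Qₙ, (ν)^{(x)} denotes the distribution ν conditioned on the first coordinate being x (viewed as a distribution on the pinned set Ω_x of tuples in coordinates 2,…,n), and Psq^{(x)} = Q₂^{(x)}⋯Qₙ^{(x)} is the sequential sweep of the pinned (n−1)-partite complex (Ω_x, π^{(x)}). -/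

import Mathlib

open Finset
open scoped Classical

noncomputable section

namespace PaperFormal

/-- A weighted `n`-partite simplicial complex: a nonempty finite set `Ω` of `n`-tuples
(the top faces, each tuple picking one element from each side `U i`) together with a
full-support probability distribution `π` on it. -/
structure WPC (n : ℕ) (U : Fin n → Type*) [∀ i, Fintype (U i)] [∀ i, DecidableEq (U i)] where
  Ω : Finset (∀ i, U i)
  nonempty : Ω.Nonempty
  π : (∀ i, U i) → ℝ
  nonneg : ∀ ω, 0 ≤ π ω
  support : ∀ ω, 0 < π ω ↔ ω ∈ Ω
  sum_one : ∑ ω : ∀ i, U i, π ω = 1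

/-- Partial assignments to the coordinates in `S`. -/
abbrev PAssign {n : ℕ} (U : Fin n → Type*) (S : Finset (Fin n)) : Type _ :=
  ∀ i : {x : Fin n // x ∈ S}, U i.1

variable {n : ℕ} {U : Fin n → Type*} [∀ i, Fintype (U i)] [∀ i, DecidableEq (U i)]

/-- Restriction of a tuple to the coordinates in `S`. -/
def restr (S : Finset (Fin n)) (ω : ∀ i, U i) : PAssign U S := fun i => ω i.1

/-- The unique assignment to the empty set of coordinates. -/
def emptyA : PAssign U (∅ : Finset (Fin n)) := fun i => absurd i.2 (Finset.notMem_empty i.1)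

/-- Probability of the event `E` under `π`. -/
def pr (X : WPC n U) (E : (∀ i, U i) → Prop) : ℝ :=
  ∑ ω : ∀ i, U i, if E ω then X.π ω else 0

lemma pr_congr (X : WPC n U) {E F : (∀ i, U i) → Prop} (h : ∀ ω, E ω ↔ F ω) :
    pr X E = pr X F :=
  Finset.sum_congr rfl fun ω _ => if_congr (h ω) rfl rfl

/-- The `S`-marginal of `π`, evaluated at the partial assignment `α`. -/
def marg (X : WPC n U) (S : Finset (Fin n)) (α : PAssign U S) : ℝ :=
  pr X fun ω => restr S ω = α

/-- The pinned marginal `π_T^{(α)}`: the probability that the coordinates in `T` agree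
with `β`, conditioned on the coordinates in `S` agreeing with `α`. -/
def cmarg (X : WPC n U) {S T : Finset (Fin n)} (α : PAssign U S) (β : PAssign U T) : ℝ :=
  pr X (fun ω => restr S ω = α ∧ restr T ω = β) / marg X S α

/-- The colored random walk `C_α^{I → J}`: entry `(τI, τJ)` is
`Pr[ω_J = τJ | ω_I = τI, ω_S = α]`. -/
def Cwalk (X : WPC n U) (S I J : Finset (Fin n)) (α : PAssign U S)
    (τI : PAssign U I) (τJ : PAssign U J) : ℝ :=
  pr X (fun ω => restr S ω = α ∧ restr I ω = τI ∧ restr J ω = τJ) /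
    pr X (fun ω => restr S ω = α ∧ restr I ω = τI)

/-- The second largest singular value of a row-stochastic matrix `M` satisfying
`μA M = μB`, with respect to the inner products weighted by `μA` and `μB`, via its
variational characterization
`σ₂(M) = sup { ⟨f, M g⟩_{μA} : ⟨f,1⟩_{μA} = ⟨g,1⟩_{μB} = 0, ‖f‖_{μA} = ‖g‖_{μB} = 1 }`. -/
def sigma2 {A B : Type*} [Fintype A] [Fintype B]
    (μA : A → ℝ) (μB : B → ℝ) (M : A → B → ℝ) : ℝ :=
  sSup { r : ℝ | ∃ f : A → ℝ, ∃ g : B → ℝ,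
    (∑ a, μA a * f a) = 0 ∧ (∑ b, μB b * g b) = 0 ∧
    (∑ a, μA a * f a ^ 2) = 1 ∧ (∑ b, μB b * g b ^ 2) = 1 ∧
    r = ∑ a, μA a * f a * ∑ b, M a b * g b }

/-- The second largest singular value `σ₂(C_α^{I → J})`, with respect to the inner
products weighted by the pinned marginals `π_I^{(α)}` and `π_J^{(α)}`. -/
def sigma2C (X : WPC n U) (S I J : Finset (Fin n)) (α : PAssign U S) : ℝ :=
  sigma2 (fun τI : PAssign U I => cmarg X α τI) (fun τJ : PAssign U J => cmarg X α τJ)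
    (Cwalk X S I J α)

/-- `ε^{I → J}`: the maximum of `σ₂(C_α^{I → J})` over all partial assignments `α`
to the coordinates outside `I ∪ J` (realizable on `Ω`). -/
def epsIJ (X : WPC n U) (I J : Finset (Fin n)) : ℝ :=
  sSup { r : ℝ | ∃ α : PAssign U (I ∪ J)ᶜ,
    0 < marg X (I ∪ J)ᶜ α ∧ r = sigma2C X (I ∪ J)ᶜ I J α }

/-- `π` is `(ε 0, …, ε (n-2))`-product: for every realizable pinning `α` of a set `S` of at
most `n - 2` coordinates, and all distinct `i, j ∉ S`, `σ₂(C_α^{i → j}) ≤ ε |S|`. -/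
def isProduct (X : WPC n U) (ε : ℕ → ℝ) : Prop :=
  ∀ S : Finset (Fin n), S.card ≤ n - 2 → ∀ α : PAssign U S, 0 < marg X S α →
    ∀ i j : Fin n, i ∉ S → j ∉ S → i ≠ j → sigma2C X S {i} {j} α ≤ ε S.card

/-- The update operator `Q_i`: resample the `i`-th coordinate according to `π`,
conditionally on all the other coordinates. -/
def Qmat (X : WPC n U) (i : Fin n) : Matrix (∀ i, U i) (∀ i, U i) ℝ :=
  Matrix.of fun ω ω' =>
    pr X (fun τ => τ = ω' ∧ restr {i}ᶜ τ = restr {i}ᶜ ω) /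
      pr X (fun τ => restr {i}ᶜ τ = restr {i}ᶜ ω)

/-- The sequential sweep `P_seq^{(s)} = Q_{s 0} Q_{s 1} ⋯ Q_{s (n-1)}`. -/
def Psq (X : WPC n U) (s : Equiv.Perm (Fin n)) : Matrix (∀ i, U i) (∀ i, U i) ℝ :=
  (List.ofFn fun j : Fin n => Qmat X (s j)).prod

/-- The second largest singular value of the sequential sweep, with respect to the
inner product weighted by its stationary distribution `π`. -/
def sigma2P (X : WPC n U) (s : Equiv.Perm (Fin n)) : ℝ :=
  sigma2 X.π X.π fun ω ω' => Psq X s ω ω'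

/-- The link graph `G_α` of a pinning `α` of the coordinates in `S`: vertices are pairs
`(i, x)` with `i ∉ S`, and `(i,x)`, `(j,y)` are adjacent when `i ≠ j` and the event
`{ω_i = x, ω_j = y, ω_S = α}` has positive probability. -/
def linkGraph (X : WPC n U) (S : Finset (Fin n)) (α : PAssign U S) :
    SimpleGraph ((i : Fin n) × U i) where
  Adj v w := v.1 ≠ w.1 ∧ v.1 ∉ S ∧ w.1 ∉ S ∧
    0 < pr X fun ω => restr S ω = α ∧ ω v.1 = v.2 ∧ ω w.1 = w.2
  symm := by
    constructor
    rintro v w ⟨h1, h2, h3, h4⟩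
    refine ⟨h1.symm, h3, h2, ?_⟩
    have e : pr X (fun ω => restr S ω = α ∧ ω w.1 = w.2 ∧ ω v.1 = v.2)
        = pr X (fun ω => restr S ω = α ∧ ω v.1 = v.2 ∧ ω w.1 = w.2) :=
      pr_congr X fun ω => by tauto
    rw [e]; exact h4
  loopless := ⟨by rintro v ⟨h1, -⟩; exact h1 rfl⟩

/-- `(X, π)` is link-connected: in every link graph (of a realizable pinning of at most
`n - 2` coordinates), every two valid vertices are connected by a path. -/
def linkConnected (X : WPC n U) : Prop :=
  ∀ S : Finset (Fin n), S.card ≤ n - 2 → ∀ α : PAssign U S, 0 < marg X S α →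
    ∀ v w : (i : Fin n) × U i, v.1 ∉ S → w.1 ∉ S →
      0 < pr X (fun ω => restr S ω = α ∧ ω v.1 = v.2) →
      0 < pr X (fun ω => restr S ω = α ∧ ω w.1 = w.2) →
      (linkGraph X S α).Reachable v w

/-- The stationary measure of the random walk on the link graph `G_α`. -/
def linkMeas (X : WPC n U) (S : Finset (Fin n)) (α : PAssign U S) :
    (i : Fin n) × U i → ℝ :=
  fun v => if v.1 ∈ S then 0 else
    (1 / ((n : ℝ) - (S.card : ℝ))) *
      (pr X (fun ω => restr S ω = α ∧ ω v.1 = v.2) / marg X S α)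

/-- The random walk matrix `M_α` of the link graph `G_α`. -/
def linkWalk (X : WPC n U) (S : Finset (Fin n)) (α : PAssign U S) :
    (i : Fin n) × U i → (i : Fin n) × U i → ℝ :=
  fun v w =>
    if v.1 = w.1 ∨ v.1 ∈ S ∨ w.1 ∈ S then 0 else
      (1 / ((n : ℝ) - (S.card : ℝ) - 1)) *
        (pr X (fun ω => restr S ω = α ∧ ω v.1 = v.2 ∧ ω w.1 = w.2) /
          pr X (fun ω => restr S ω = α ∧ ω v.1 = v.2))

/-- The second largest eigenvalue of a random walk matrix `M`, self-adjoint with respect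
to the probability measure `μ`, via its variational characterization. -/
def lambda2 {A : Type*} [Fintype A] (μ : A → ℝ) (M : A → A → ℝ) : ℝ :=
  sSup { r : ℝ | ∃ f : A → ℝ,
    (∑ a, μ a * f a) = 0 ∧ (∑ a, μ a * f a ^ 2) = 1 ∧
    r = ∑ a, μ a * f a * ∑ b, M a b * f b }

/-- `(X, π)` is a `(γ 0, …, γ (n-2))`-local spectral expander:
`λ₂(M_α) ≤ γ |S|` for every realizable pinning `α` of at most `n - 2` coordinates. -/
def isLocalExpander (X : WPC n U) (γ : ℕ → ℝ) : Prop :=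
  ∀ S : Finset (Fin n), S.card ≤ n - 2 → ∀ α : PAssign U S, 0 < marg X S α →
    lambda2 (linkMeas X S α) (linkWalk X S α) ≤ γ S.card

/-- Kullback–Leibler divergence `D(μ ‖ ν) = Σ_a μ(a) log (μ(a) / ν(a))`. -/
def KL {A : Type*} [Fintype A] (μ ν : A → ℝ) : ℝ :=
  ∑ a, μ a * Real.log (μ a / ν a)

/-- `μ` is a probability distribution supported on `{a | P a}`. -/
def distOn {A : Type*} [Fintype A] (P : A → Prop) (μ : A → ℝ) : Prop :=
  (∀ a, 0 ≤ μ a) ∧ (∑ a, μ a) = 1 ∧ ∀ a, ¬ P a → μ a = 0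

/-- The `(I, J)` entropy contraction parameter `η^{I → J} = 1 - κ^{I → J}`, where
`κ^{I → J}` is the supremum of `D(μ C_α^{I→J} ‖ π_J^{(α)}) / D(μ ‖ π_I^{(α)})` over all
realizable pinnings `α` of the coordinates outside `I ∪ J` and all distributions `μ` on
the assignments of `I` compatible with `α`. -/
def etaIJ (X : WPC n U) (I J : Finset (Fin n)) : ℝ :=
  1 - sSup { r : ℝ | ∃ α : PAssign U (I ∪ J)ᶜ, 0 < marg X (I ∪ J)ᶜ α ∧
    ∃ μ : PAssign U I → ℝ,
      distOn (fun τ => 0 < pr X fun ω => restr (I ∪ J)ᶜ ω = α ∧ restr I ω = τ) μ ∧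
      KL μ (fun τ : PAssign U I => cmarg X α τ) ≠ 0 ∧
      r = KL (fun τJ : PAssign U J => ∑ τI : PAssign U I, μ τI * Cwalk X (I ∪ J)ᶜ I J α τI τJ)
            (fun τJ : PAssign U J => cmarg X α τJ) /
          KL μ (fun τ : PAssign U I => cmarg X α τ) }

/-- The entropy contraction factor `EC(M) = 1 - sup_μ D(μ M ‖ π) / D(μ ‖ π)` of a random
walk matrix `M` with stationary distribution `π`. -/
def EC (X : WPC n U) (M : Matrix (∀ i, U i) (∀ i, U i) ℝ) : ℝ :=
  1 - sSup { r : ℝ | ∃ μ : (∀ i, U i) → ℝ, distOn (fun ω => ω ∈ X.Ω) μ ∧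
    KL μ X.π ≠ 0 ∧ r = KL (Matrix.vecMul μ M) X.π / KL μ X.π }

/-- The `π`-weighted inner product on `ℝ^Ω`. -/
def ip (X : WPC n U) (f g : {ω // ω ∈ X.Ω} → ℝ) : ℝ :=
  ∑ ω : {ω // ω ∈ X.Ω}, X.π ω.1 * f ω * g ω

/-- The indicator vector `u_α ∈ ℝ^Ω` of the partial assignment `α` to the coordinates
outside `T`. -/
def uvec (X : WPC n U) (T : Finset (Fin n)) (α : PAssign U Tᶜ) : {ω // ω ∈ X.Ω} → ℝ :=
  fun ω => if restr Tᶜ ω.1 = α then 1 else 0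

/-- The subspace `U_T = span { u_α : α an assignment to the coordinates outside T }`. -/
def Uspan (X : WPC n U) (T : Finset (Fin n)) : Submodule ℝ ({ω // ω ∈ X.Ω} → ℝ) :=
  Submodule.span ℝ { f | ∃ α : PAssign U Tᶜ, f = uvec X T α }

/-- The subspace of functions on `Ω` depending only on the coordinates outside `T`. -/
def Uinv (X : WPC n U) (T : Finset (Fin n)) : Submodule ℝ ({ω // ω ∈ X.Ω} → ℝ) where
  carrier := { f | ∀ ω ω' : {ω // ω ∈ X.Ω}, restr Tᶜ ω.1 = restr Tᶜ ω'.1 → f ω = f ω' }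
  add_mem' := by
    intro f g hf hg ω ω' h
    simp only [Pi.add_apply, hf ω ω' h, hg ω ω' h]
  zero_mem' := by intro ω ω' h; rfl
  smul_mem' := by
    intro c f hf ω ω' h
    simp only [Pi.smul_apply, hf ω ω' h]

/-- The orthogonal complement (with respect to `⟨·,·⟩_π`) of a subspace, as a set. -/
def orthC (X : WPC n U) (W : Submodule ℝ ({ω // ω ∈ X.Ω} → ℝ)) :
    Set ({ω // ω ∈ X.Ω} → ℝ) :=
  { f | ∀ g ∈ W, ip X f g = 0 }

/-- The cosine of the angle between two subspaces of `ℝ^Ω`: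
`cos(A,B) = sup { ⟨u,v⟩_π : u ∈ A ∩ (A ⊓ B)ᗮ, v ∈ B ∩ (A ⊓ B)ᗮ, ‖u‖_π = ‖v‖_π = 1 }`. -/
def cosAngle (X : WPC n U) (A B : Submodule ℝ ({ω // ω ∈ X.Ω} → ℝ)) : ℝ :=
  sSup { r : ℝ | ∃ u, u ∈ A ∧ u ∈ orthC X (A ⊓ B) ∧
    ∃ v, v ∈ B ∧ v ∈ orthC X (A ⊓ B) ∧
    ip X u u = 1 ∧ ip X v v = 1 ∧ r = ip X u v }

/-- The update operator `Q_i` as an operator on `ℝ^Ω`. -/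
def Qop (X : WPC n U) (i : Fin n) (f : {ω // ω ∈ X.Ω} → ℝ) : {ω // ω ∈ X.Ω} → ℝ :=
  fun ω => ∑ ω' : {ω // ω ∈ X.Ω}, Qmat X i ω.1 ω'.1 * f ω'

/-- Concatenation of partial assignments on disjoint coordinate sets. -/
def joinAssign {S T : Finset (Fin n)} (β : PAssign U S) (α : PAssign U T) :
    PAssign U (S ∪ T) :=
  fun i => if h : i.1 ∈ S then β ⟨i.1, h⟩
    else α ⟨i.1, (Finset.mem_union.mp i.2).resolve_left h⟩

/-- The `S`-marginal of a (not necessarily normalized) distribution `ν` on tuples. -/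
def distMarg (ν : (∀ i, U i) → ℝ) (S : Finset (Fin n)) (a : PAssign U S) : ℝ :=
  ∑ ω : ∀ i, U i, if restr S ω = a then ν ω else 0

/-- The distribution `ν` conditioned on the `i`-th coordinate being `x`. -/
def condAt (ν : (∀ i, U i) → ℝ) (i : Fin n) (x : U i) : (∀ i, U i) → ℝ :=
  fun ω => if ω i = x then ν ω / (∑ ω' : ∀ i, U i, if ω' i = x then ν ω' else 0) else 0

/-- The influence matrix `Inf_α` of the pinning `α` of the coordinates in `S`:
`Inf_α((i,x),(j,y)) = Pr[ω_j = y | ω_i = x, ω_S = α] - Pr[ω_j = y | ω_S = α]`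
for `i ≠ j` outside `S`, and `0` otherwise. -/
def InfMat (X : WPC n U) (S : Finset (Fin n)) (α : PAssign U S) :
    Matrix ((i : Fin n) × U i) ((i : Fin n) × U i) ℝ :=
  Matrix.of fun v w =>
    if v.1 = w.1 ∨ v.1 ∈ S ∨ w.1 ∈ S then 0 else
      pr X (fun ω => restr S ω = α ∧ ω v.1 = v.2 ∧ ω w.1 = w.2) /
          pr X (fun ω => restr S ω = α ∧ ω v.1 = v.2) -
        pr X (fun ω => restr S ω = α ∧ ω w.1 = w.2) / marg X S α

/-- `π` is `(c 0, …, c (n-2))`-spectrally independent: every (real) eigenvalue of the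
influence matrix of a realizable pinning of at most `n - 2` coordinates is at most
`c |S|`. -/
def spectrallyIndependent (X : WPC n U) (c : ℕ → ℝ) : Prop :=
  ∀ S : Finset (Fin n), S.card ≤ n - 2 → ∀ α : PAssign U S, 0 < marg X S α →
    ∀ r : ℝ,
      (∃ v : ((i : Fin n) × U i) → ℝ, v ≠ 0 ∧ (InfMat X S α).mulVec v = r • v) →
      r ≤ c S.card

end PaperFormal

namespace PaperFormal

variable {n : ℕ} {U : Fin n → Type*} [∀ i, Fintype (U i)] [∀ i, DecidableEq (U i)]

section Aux

variable {n : ℕ} {U : Fin n → Type*} [∀ i, Fintype (U i)] [∀ i, DecidableEq (U i)]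

/-- A matrix is `Good` (w.r.t. `X` and coordinate `i0`) if nonzero entries preserve
support and the `i0` coordinate, and rows at supported points sum to `1`. -/
def Good (X : WPC n U) (i0 : Fin n) (M : Matrix (∀ i, U i) (∀ i, U i) ℝ) : Prop :=
  (∀ ω ω', M ω ω' ≠ 0 → (0 < X.π ω → 0 < X.π ω') ∧ ω i0 = ω' i0) ∧
  (∀ ω, 0 < X.π ω → ∑ ω', M ω ω' = 1)

lemma good_one (X : WPC n U) (i0 : Fin n) : Good X i0 1 := by
  constructor
  · intro ω ω' h
    by_cases e : ω = ω'
    · subst e; exact ⟨id, rfl⟩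
    · simp [Matrix.one_apply, e] at h
  · intro ω _
    simp [Matrix.one_apply]

lemma pr_eq_and (X : WPC n U) (ω' : ∀ i, U i) (P : (∀ i, U i) → Prop) :
    pr X (fun τ => τ = ω' ∧ P τ) = if P ω' then X.π ω' else 0 := by
  unfold pr
  rw [Finset.sum_eq_single ω']
  · by_cases h2 : P ω' <;> simp [h2]
  · intro b _ hb; simp [hb]
  · intro h; simp at h

lemma Qmat_ne_zero_pos {X : WPC n U} {j : Fin n} {ω τ : ∀ i, U i}
    (h : Qmat X j ω τ ≠ 0) : 0 < X.π τ := by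
  unfold Qmat at h
  simp only [Matrix.of_apply] at h
  have hnum : pr X (fun σ => σ = τ ∧ restr {j}ᶜ σ = restr {j}ᶜ ω) ≠ 0 := by
    intro h0; rw [h0] at h; simp at h
  rw [pr_eq_and] at hnum
  by_cases hc : restr ({j}ᶜ : Finset (Fin n)) τ = restr ({j}ᶜ : Finset (Fin n)) ω
  · rw [if_pos hc] at hnum
    exact lt_of_le_of_ne (X.nonneg τ) (Ne.symm hnum)
  · rw [if_neg hc] at hnum; exact absurd rfl hnum

lemma Qmat_ne_zero_restr {X : WPC n U} {j : Fin n} {ω τ : ∀ i, U i}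
    (h : Qmat X j ω τ ≠ 0) :
    restr ({j}ᶜ : Finset (Fin n)) τ = restr ({j}ᶜ : Finset (Fin n)) ω := by
  unfold Qmat at h
  simp only [Matrix.of_apply] at h
  have hnum : pr X (fun σ => σ = τ ∧ restr {j}ᶜ σ = restr {j}ᶜ ω) ≠ 0 := by
    intro h0; rw [h0] at h; simp at h
  rw [pr_eq_and] at hnum
  by_cases hc : restr ({j}ᶜ : Finset (Fin n)) τ = restr ({j}ᶜ : Finset (Fin n)) ω
  · exact hc
  · rw [if_neg hc] at hnum; exact absurd rfl hnum

lemma pr_pos_of_mem {X : WPC n U} {E : (∀ i, U i) → Prop} {ω : ∀ i, U i}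
    (hE : E ω) (hπ : 0 < X.π ω) : 0 < pr X E := by
  unfold pr
  refine lt_of_lt_of_le hπ ?_
  refine le_trans (le_of_eq ?_) (Finset.single_le_sum (fun τ _ => ?_) (Finset.mem_univ ω))
  · simp [hE]
  · by_cases h : E τ <;> simp [h, X.nonneg τ]

lemma sum_pr_eq (X : WPC n U) (P : (∀ i, U i) → Prop) :
    (∑ ω' : ∀ i, U i, pr X (fun τ => τ = ω' ∧ P τ)) = pr X P := by
  unfold pr
  rw [Finset.sum_comm]
  refine Finset.sum_congr rfl fun τ _ => ?_
  by_cases h : P τ <;> simp [h]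

lemma good_Qmat (X : WPC n U) (i0 j : Fin n) (hj : j ≠ i0) : Good X i0 (Qmat X j) := by
  constructor
  · intro ω ω' h
    refine ⟨fun _ => Qmat_ne_zero_pos h, ?_⟩
    have hr := Qmat_ne_zero_restr h
    have hm : i0 ∈ ({j}ᶜ : Finset (Fin n)) := by
      simp [Finset.mem_compl, Ne.symm hj]
    exact (congrFun hr ⟨i0, hm⟩).symm
  · intro ω hω
    have hden : 0 < pr X (fun τ => restr {j}ᶜ τ = restr {j}ᶜ ω) :=
      pr_pos_of_mem (E := fun τ => restr ({j}ᶜ : Finset (Fin n)) τ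
        = restr ({j}ᶜ : Finset (Fin n)) ω) rfl hω
    have hsum : (∑ ω' : ∀ i, U i,
        pr X (fun τ => τ = ω' ∧ restr {j}ᶜ τ = restr {j}ᶜ ω))
        = pr X (fun τ => restr {j}ᶜ τ = restr {j}ᶜ ω) :=
      sum_pr_eq X (fun τ => restr ({j}ᶜ : Finset (Fin n)) τ
        = restr ({j}ᶜ : Finset (Fin n)) ω)
    unfold Qmat
    simp only [Matrix.of_apply]
    rw [← Finset.sum_div, hsum, div_self (ne_of_gt hden)]

lemma good_mul {X : WPC n U} {i0 : Fin n} {M N : Matrix (∀ i, U i) (∀ i, U i) ℝ}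
    (hM : Good X i0 M) (hN : Good X i0 N) : Good X i0 (M * N) := by
  constructor
  · intro ω ω'' h
    rw [Matrix.mul_apply] at h
    obtain ⟨ω', -, h'⟩ := Finset.exists_ne_zero_of_sum_ne_zero h
    have h1 : M ω ω' ≠ 0 := fun h0 => h' (by rw [h0, zero_mul])
    have h2 : N ω' ω'' ≠ 0 := fun h0 => h' (by rw [h0, mul_zero])
    obtain ⟨p1, c1⟩ := hM.1 ω ω' h1
    obtain ⟨p2, c2⟩ := hN.1 ω' ω'' h2
    exact ⟨fun h => p2 (p1 h), c1.trans c2⟩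
  · intro ω hω
    simp only [Matrix.mul_apply]
    rw [Finset.sum_comm]
    have key : ∀ ω' : ∀ i, U i, (∑ ω'' : ∀ i, U i, M ω ω' * N ω' ω'') = M ω ω' := by
      intro ω'
      rw [← Finset.mul_sum]
      by_cases h1 : M ω ω' = 0
      · simp [h1]
      · rw [hN.2 ω' ((hM.1 ω ω' h1).1 hω), mul_one]
    rw [Finset.sum_congr rfl fun ω' _ => key ω']
    exact hM.2 ω hω

lemma good_prod {X : WPC n U} {i0 : Fin n} (L : List (Matrix (∀ i, U i) (∀ i, U i) ℝ))
    (h : ∀ M ∈ L, Good X i0 M) : Good X i0 L.prod := by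
  induction L with
  | nil => exact good_one X i0
  | cons M L ih =>
    rw [List.prod_cons]
    exact good_mul (h M List.mem_cons_self) (ih fun N hN => h N (List.mem_cons_of_mem M hN))

lemma ofFn_eq_cons {α : Type*} {m : ℕ} (hm : 0 < m) (f : Fin m → α) :
    List.ofFn f = f ⟨0, hm⟩ :: (List.ofFn f).tail := by
  cases m with
  | zero => omega
  | succ k => rw [List.ofFn_succ]; rfl

lemma mem_tail_ofFn {α : Type*} {m : ℕ} (f : Fin m → α) {a : α}
    (h : a ∈ (List.ofFn f).tail) : ∃ j : Fin m, (j : ℕ) ≠ 0 ∧ a = f j := by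
  cases m with
  | zero => simp [List.ofFn_zero] at h
  | succ k =>
    rw [List.ofFn_succ] at h
    simp only [List.tail_cons] at h
    rw [List.mem_ofFn] at h
    obtain ⟨i, hi⟩ := h
    exact ⟨i.succ, by simp [Fin.val_succ], hi.symm⟩

end Aux


theorem pinned_seq_sweep
    (hn : 2 ≤ n) (X : WPC n U) (i0 : Fin n) (hi0 : (i0 : ℕ) = 0)
    (μ : (∀ i, U i) → ℝ) (hμ : distOn (fun ω => ω ∈ X.Ω) μ)
    (x : U i0)
    (hx : 0 < ∑ ω : ∀ i, U i,
      if ω i0 = x then Matrix.vecMul μ (Qmat X i0) ω else 0) :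
    condAt (Matrix.vecMul μ (Psq X 1)) i0 x =
      Matrix.vecMul (condAt (Matrix.vecMul μ (Qmat X i0)) i0 x)
        ((List.ofFn fun j : Fin n => Qmat X j).tail.prod) := by
  classical
  set L : List (Matrix (∀ i, U i) (∀ i, U i) ℝ) := List.ofFn fun j : Fin n => Qmat X j with hL
  set M : Matrix (∀ i, U i) (∀ i, U i) ℝ := L.tail.prod with hMdef
  have hi0eq : i0 = (⟨0, by omega⟩ : Fin n) := by
    apply Fin.ext; simpa using hi0
  -- Psq X 1 = Qmat X i0 * M
  have hPsq : Psq X 1 = Qmat X i0 * M := by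
    have h1 : Psq X 1 = L.prod := by rw [hL]; rfl
    rw [h1, hMdef]
    conv_lhs => rw [hL, ofFn_eq_cons (show 0 < n by omega) fun j : Fin n => Qmat X j]
    rw [List.prod_cons, hi0eq, hL]
  -- M is Good
  have hGood : Good X i0 M := by
    apply good_prod
    intro N hN
    rw [hL] at hN
    obtain ⟨j, hj0, rfl⟩ := mem_tail_ofFn _ hN
    apply good_Qmat
    intro h
    rw [h, hi0] at hj0
    exact hj0 rfl
  set ν : (∀ i, U i) → ℝ := Matrix.vecMul μ (Qmat X i0) with hν
  have hνsupp : ∀ τ, ν τ ≠ 0 → 0 < X.π τ := by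
    intro τ h
    rw [hν] at h
    rw [show Matrix.vecMul μ (Qmat X i0) τ = ∑ ω : ∀ i, U i, μ ω * Qmat X i0 ω τ from rfl] at h
    obtain ⟨ω, -, h'⟩ := Finset.exists_ne_zero_of_sum_ne_zero h
    exact Qmat_ne_zero_pos (fun h0 => h' (by rw [h0, mul_zero]))
  have hvm : Matrix.vecMul μ (Psq X 1) = Matrix.vecMul ν M := by
    rw [hPsq, ← Matrix.vecMul_vecMul, hν]
  have hvmM : ∀ ω : ∀ i, U i, Matrix.vecMul ν M ω = ∑ τ : ∀ i, U i, ν τ * M τ ω :=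
    fun ω => rfl
  -- normalizing constants agree
  have hZ : (∑ ω' : ∀ i, U i, if ω' i0 = x then Matrix.vecMul ν M ω' else 0)
      = ∑ ω' : ∀ i, U i, if ω' i0 = x then ν ω' else 0 := by
    have lhs_eq : ∀ ω' : ∀ i, U i, (if ω' i0 = x then Matrix.vecMul ν M ω' else 0)
        = ∑ τ : ∀ i, U i, (if ω' i0 = x then ν τ * M τ ω' else 0) := by
      intro ω'
      by_cases h : ω' i0 = x
      · rw [if_pos h, hvmM]
        exact Finset.sum_congr rfl fun τ _ => by rw [if_pos h]
      · rw [if_neg h]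
        rw [Finset.sum_congr rfl fun τ _ => if_neg h, Finset.sum_const_zero]
    rw [Finset.sum_congr rfl fun ω' _ => lhs_eq ω', Finset.sum_comm]
    refine Finset.sum_congr rfl fun τ _ => ?_
    by_cases hτ0 : ν τ = 0
    · simp [hτ0]
    · have hπ := hνsupp τ hτ0
      by_cases hτx : τ i0 = x
      · rw [if_pos hτx]
        have step : ∀ ω' : ∀ i, U i, (if ω' i0 = x then ν τ * M τ ω' else 0)
            = ν τ * M τ ω' := by
          intro ω'
          by_cases h : ω' i0 = x
          · rw [if_pos h]
          · rw [if_neg h]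
            have hM0 : M τ ω' = 0 := by
              by_contra hM0
              exact h (((hGood.1 τ ω' hM0).2).symm.trans hτx)
            rw [hM0, mul_zero]
        rw [Finset.sum_congr rfl fun ω' _ => step ω', ← Finset.mul_sum,
          hGood.2 τ hπ, mul_one]
      · rw [if_neg hτx]
        have step : ∀ ω' : ∀ i, U i, (if ω' i0 = x then ν τ * M τ ω' else 0) = 0 := by
          intro ω'
          by_cases h : ω' i0 = x
          · rw [if_pos h]
            have hM0 : M τ ω' = 0 := by
              by_contra hM0
              exact hτx (((hGood.1 τ ω' hM0).2).trans h)
            rw [hM0, mul_zero]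
          · rw [if_neg h]
        rw [Finset.sum_congr rfl fun ω' _ => step ω', Finset.sum_const_zero]
  -- conclude pointwise
  rw [hvm]
  funext ω
  unfold condAt
  rw [show Matrix.vecMul (fun ω => if ω i0 = x then ν ω /
        (∑ ω' : ∀ i, U i, if ω' i0 = x then ν ω' else 0) else 0) M ω
      = ∑ τ : ∀ i, U i, (if τ i0 = x then ν τ /
        (∑ ω' : ∀ i, U i, if ω' i0 = x then ν ω' else 0) else 0) * M τ ω from rfl]
  set Z : ℝ := ∑ ω' : ∀ i, U i, if ω' i0 = x then ν ω' else 0 with hZdef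
  by_cases hωx : ω i0 = x
  · rw [if_pos hωx, hZ, hvmM, Finset.sum_div]
    refine Finset.sum_congr rfl fun τ _ => ?_
    by_cases hτx : τ i0 = x
    · rw [if_pos hτx, div_mul_eq_mul_div]
    · rw [if_neg hτx]
      have hM0 : M τ ω = 0 := by
        by_contra hM0
        exact hτx (((hGood.1 τ ω hM0).2).trans hωx)
      rw [hM0, mul_zero, zero_div, zero_mul]
  · rw [if_neg hωx]
    symm
    have step : ∀ τ : ∀ i, U i, (if τ i0 = x then ν τ / Z else 0) * M τ ω = 0 := by
      intro τ
      by_cases hτx : τ i0 = x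
      · rw [if_pos hτx]
        have hM0 : M τ ω = 0 := by
          by_contra hM0
          exact hωx (((hGood.1 τ ω hM0).2).symm.trans hτx)
        rw [hM0, mul_zero]
      · rw [if_neg hτx, zero_mul]
    rw [Finset.sum_congr rfl fun τ _ => step τ, Finset.sum_const_zero]

end PaperFormal
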